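/- arXiv:1301.1205 — 2 statements merged into one kernel-verified Lean document; each statement's English description precedes it below -/
import Mathlib

section
/- For any ρ ∈ Pₙ and ⋆-self-dual ι ∈ Pₙ with r(ρ ∘ ι) = r(ι), one has (ρ ∘ ι ∘ ρ⋆) ∘ (ρ ∘ ι ∘ ρ⋆) ∘ ρ ∘ ι = ρ ∘ ι. -/
open scoped Classical
open Relation
noncomputable section

/-- Vertices of a diagram: `inl` = unprimed points `n̄`, `inr` = primed points `n̄'`. -/
abbrev DVert (n : ℕ) := Fin n ⊕ Fin n

/-- Tripled vertex set used for gluing: bottom (unprimed of the right factor),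
middle (identified vertices), top (primed of the left factor). -/
abbrev TVert (n : ℕ) := Fin n ⊕ (Fin n ⊕ Fin n)

def embBot (n : ℕ) : DVert n → TVert n := Sum.elim Sum.inl (fun i => Sum.inr (Sum.inl i))
def embTop (n : ℕ) : DVert n → TVert n :=
  Sum.elim (fun i => Sum.inr (Sum.inl i)) (fun i => Sum.inr (Sum.inr i))
def embOut (n : ℕ) : DVert n → TVert n := Sum.elim Sum.inl (fun i => Sum.inr (Sum.inr i))

/-- The minimal equivalence relation `χ` on the tripled vertex set containing
(the embedded copies of) `τ` and `ρ`. -/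
def glue (n : ℕ) (τ ρ : Setoid (DVert n)) : Setoid (TVert n) :=
  EqvGen.setoid (fun x y =>
    (∃ a b, ρ.r a b ∧ x = embBot n a ∧ y = embBot n b) ∨
    (∃ a b, τ.r a b ∧ x = embTop n a ∧ y = embTop n b))

/-- Composition `τ ∘ ρ` in the partition monoid: glue and restrict to the outer vertices. -/
def pcomp (n : ℕ) (τ ρ : Setoid (DVert n)) : Setoid (DVert n) where
  r x y := (glue n τ ρ).r (embOut n x) (embOut n y)
  iseqv := ⟨fun _ => (glue n τ ρ).iseqv.refl _, fun h => (glue n τ ρ).iseqv.symm h,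
    fun h₁ h₂ => (glue n τ ρ).iseqv.trans h₁ h₂⟩

/-- A middle vertex of the tripled vertex set. -/
def isMiddle {n : ℕ} (x : TVert n) : Prop := ∃ i, x = Sum.inr (Sum.inl i)

/-- `c(τ,ρ)`: the number of classes of the glued relation contained in the middle row. -/
def ccount (n : ℕ) (τ ρ : Setoid (DVert n)) : ℕ :=
  {C ∈ (glue n τ ρ).classes | ∀ x ∈ C, isMiddle x}.ncard

/-- A propagating part: one meeting both the unprimed and the primed vertices. -/
def IsPropagating {n : ℕ} (C : Set (DVert n)) : Prop :=
  (∃ i, Sum.inl i ∈ C) ∧ (∃ i, Sum.inr i ∈ C)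

/-- The rank `r(σ)`: the number of propagating parts of `σ`. -/
def prank (n : ℕ) (σ : Setoid (DVert n)) : ℕ :=
  {C ∈ σ.classes | IsPropagating C}.ncard

/-- The anti-involution `⋆` swapping primed and unprimed vertices. -/
def pstar (n : ℕ) (σ : Setoid (DVert n)) : Setoid (DVert n) where
  r x y := σ.r x.swap y.swap
  iseqv := ⟨fun _ => σ.iseqv.refl _, fun h => σ.iseqv.symm h,
    fun h₁ h₂ => σ.iseqv.trans h₁ h₂⟩

/-- Minimal unprimed vertex of a part. -/
def minL {n : ℕ} (C : Set (DVert n)) : ℕ :=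
  sInf {m : ℕ | ∃ j : Fin n, (j : ℕ) = m ∧ Sum.inl j ∈ C}

/-- Minimal primed vertex of a part. -/
def minR {n : ℕ} (C : Set (DVert n)) : ℕ :=
  sInf {m : ℕ | ∃ j : Fin n, (j : ℕ) = m ∧ Sum.inr j ∈ C}

/-- Position of a propagating part `C` of `σ` in the ordering (by minimal elements) of the
intersections of the propagating parts with the unprimed vertices. -/
def posL (n : ℕ) (σ : Setoid (DVert n)) (C : Set (DVert n)) : ℕ :=
  {D ∈ σ.classes | IsPropagating D ∧ minL D < minL C}.ncard

/-- Position of a propagating part `C` of `σ` in the ordering (by minimal elements) of the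
intersections of the propagating parts with the primed vertices. -/
def posR (n : ℕ) (σ : Setoid (DVert n)) (C : Set (DVert n)) : ℕ :=
  {D ∈ σ.classes | IsPropagating D ∧ minR D < minR C}.ncard

/-- The permutation `π_σ ∈ S_k` recording how propagating lines connect the two sides of `σ`
(for a diagram of rank `k`): the unique permutation sending the position of a propagating part
on the unprimed side to its position on the primed side. -/
def permAt (n k : ℕ) (σ : Setoid (DVert n)) : Equiv.Perm (Fin k) :=
  Classical.epsilon (fun π : Equiv.Perm (Fin k) =>
    ∀ C ∈ σ.classes, IsPropagating C → ∀ h : posL n σ C < k,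
      ((π ⟨posL n σ C, h⟩ : Fin k) : ℕ) = posR n σ C)

/-- The product of the partition algebra `𝐏ₙ(δ)` on the free vector space on diagrams. -/
def pmul (n : ℕ) (δ : ℂ) (f g : Setoid (DVert n) →₀ ℂ) : Setoid (DVert n) →₀ ℂ :=
  f.sum fun τ a => g.sum fun ρ b =>
    Finsupp.single (pcomp n τ ρ) (δ ^ ccount n τ ρ * (a * b))

/-- `i(π,s)`: the number of pairs `i < j` with `s i = j` and `π i > π j`. -/
def icount (n : ℕ) (π s : Equiv.Perm (Fin n)) : ℕ :=
  (Finset.univ.filter fun p : Fin n × Fin n => p.1 < p.2 ∧ s p.1 = p.2 ∧ π p.2 < π p.1).card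


section SandwichProof

variable {n : ℕ}

private lemma eqvGen_imp {α : Type*} {r : α → α → Prop} (s : Setoid α)
    (h : ∀ x y, r x y → s.r x y) : ∀ {x y}, EqvGen r x y → s.r x y := by
  intro x y hxy
  induction hxy with
  | rel _ _ h' => exact h _ _ h'
  | refl => exact s.iseqv.refl _
  | symm _ _ _ ih => exact s.iseqv.symm ih
  | trans _ _ _ _ _ ih1 ih2 => exact s.iseqv.trans ih1 ih2

lemma glue_bot {τ ρ : Setoid (DVert n)} {u v : DVert n} (h : ρ.r u v) :
    (glue n τ ρ).r (embBot n u) (embBot n v) :=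
  EqvGen.rel _ _ (Or.inl ⟨u, v, h, rfl, rfl⟩)

lemma glue_top {τ ρ : Setoid (DVert n)} {u v : DVert n} (h : τ.r u v) :
    (glue n τ ρ).r (embTop n u) (embTop n v) :=
  EqvGen.rel _ _ (Or.inr ⟨u, v, h, rfl, rfl⟩)

lemma glue_map {β : Type*} {τ ρ : Setoid (DVert n)} (s : Setoid β) (f : TVert n → β)
    (hb : ∀ u v, ρ.r u v → s.r (f (embBot n u)) (f (embBot n v)))
    (ht : ∀ u v, τ.r u v → s.r (f (embTop n u)) (f (embTop n v))) :
    ∀ {x y}, (glue n τ ρ).r x y → s.r (f x) (f y) := by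
  intro x y hxy
  have hxy' : EqvGen (fun x y =>
      (∃ a b, ρ.r a b ∧ x = embBot n a ∧ y = embBot n b) ∨
      (∃ a b, τ.r a b ∧ x = embTop n a ∧ y = embTop n b)) x y := hxy
  clear hxy
  induction hxy' with
  | rel _ _ h' =>
    rcases h' with ⟨u, v, huv, rfl, rfl⟩ | ⟨u, v, huv, rfl, rfl⟩
    exacts [hb u v huv, ht u v huv]
  | refl => exact s.iseqv.refl _
  | symm _ _ _ ih => exact s.iseqv.symm ih
  | trans _ _ _ _ _ ih1 ih2 => exact s.iseqv.trans ih1 ih2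

end SandwichProof
namespace SandwichAux

variable {n : ℕ}

/-! ### The star anti-involution -/

def TFlip : TVert n → TVert n := fun x => match x with
  | .inl i => .inr (.inr i)
  | .inr (.inl m) => .inr (.inl m)
  | .inr (.inr i) => .inl i

lemma TFlip_embBot (u : DVert n) : TFlip (embBot n u) = embTop n u.swap := by cases u <;> rfl
lemma TFlip_embTop (u : DVert n) : TFlip (embTop n u) = embBot n u.swap := by cases u <;> rfl
lemma TFlip_embOut (u : DVert n) : TFlip (embOut n u) = embOut n u.swap := by cases u <;> rfl

lemma pstar_pstar (a : Setoid (DVert n)) : pstar n (pstar n a) = a := by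
  apply Setoid.ext
  intro x y
  show a.r x.swap.swap y.swap.swap ↔ a.r x y
  rw [Sum.swap_swap, Sum.swap_swap]

lemma pstar_r {a : Setoid (DVert n)} {u v : DVert n} (h : a.r u v) :
    (pstar n a).r u.swap v.swap := by
  show a.r u.swap.swap v.swap.swap
  rwa [Sum.swap_swap, Sum.swap_swap]

lemma glue_flip {a b : Setoid (DVert n)} :
    ∀ {x y}, (glue n a b).r x y →
      (glue n (pstar n b) (pstar n a)).r (TFlip x) (TFlip y) := by
  refine glue_map _ TFlip ?_ ?_
  · intro u v h
    rw [TFlip_embBot, TFlip_embBot]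
    exact glue_top (pstar_r h)
  · intro u v h
    rw [TFlip_embTop, TFlip_embTop]
    exact glue_bot (pstar_r h)

lemma pstar_pcomp (a b : Setoid (DVert n)) :
    pstar n (pcomp n a b) = pcomp n (pstar n b) (pstar n a) := by
  apply Setoid.ext
  intro x y
  show (glue n a b).r (embOut n x.swap) (embOut n y.swap) ↔
    (glue n (pstar n b) (pstar n a)).r (embOut n x) (embOut n y)
  constructor
  · intro h
    have := glue_flip h
    rwa [TFlip_embOut, TFlip_embOut, Sum.swap_swap, Sum.swap_swap] at this
  · intro h
    have := glue_flip h
    rwa [TFlip_embOut, TFlip_embOut, pstar_pstar, pstar_pstar] at this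

/-! ### The 4-row glue -/

abbrev QVert (n : ℕ) := Fin n ⊕ (Fin n ⊕ (Fin n ⊕ Fin n))

def q0 (i : Fin n) : QVert n := Sum.inl i
def q1 (i : Fin n) : QVert n := Sum.inr (Sum.inl i)
def q2 (i : Fin n) : QVert n := Sum.inr (Sum.inr (Sum.inl i))
def q3 (i : Fin n) : QVert n := Sum.inr (Sum.inr (Sum.inr i))

def e01 : DVert n → QVert n := Sum.elim q0 q1
def e12 : DVert n → QVert n := Sum.elim q1 q2
def e23 : DVert n → QVert n := Sum.elim q2 q3
def eO : DVert n → QVert n := Sum.elim q0 q3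

def bigGen (a b c : Setoid (DVert n)) : QVert n → QVert n → Prop := fun x y =>
  (∃ u v, c.r u v ∧ x = e01 u ∧ y = e01 v) ∨
  (∃ u v, b.r u v ∧ x = e12 u ∧ y = e12 v) ∨
  (∃ u v, a.r u v ∧ x = e23 u ∧ y = e23 v)

def bigGlue (a b c : Setoid (DVert n)) : Setoid (QVert n) := EqvGen.setoid (bigGen a b c)

lemma bigGlue_c {a b c : Setoid (DVert n)} {u v : DVert n} (h : c.r u v) :
    (bigGlue a b c).r (e01 u) (e01 v) := EqvGen.rel _ _ (Or.inl ⟨u, v, h, rfl, rfl⟩)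

lemma bigGlue_b {a b c : Setoid (DVert n)} {u v : DVert n} (h : b.r u v) :
    (bigGlue a b c).r (e12 u) (e12 v) := EqvGen.rel _ _ (Or.inr (Or.inl ⟨u, v, h, rfl, rfl⟩))

lemma bigGlue_a {a b c : Setoid (DVert n)} {u v : DVert n} (h : a.r u v) :
    (bigGlue a b c).r (e23 u) (e23 v) := EqvGen.rel _ _ (Or.inr (Or.inr ⟨u, v, h, rfl, rfl⟩))

lemma bigGlue_map {β : Type*} {a b c : Setoid (DVert n)} (s : Setoid β) (f : QVert n → β)
    (hc : ∀ u v, c.r u v → s.r (f (e01 u)) (f (e01 v)))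
    (hb : ∀ u v, b.r u v → s.r (f (e12 u)) (f (e12 v)))
    (ha : ∀ u v, a.r u v → s.r (f (e23 u)) (f (e23 v))) :
    ∀ {x y}, (bigGlue a b c).r x y → s.r (f x) (f y) := by
  intro x y hxy
  have hxy' : EqvGen (bigGen a b c) x y := hxy
  clear hxy
  induction hxy' with
  | rel _ _ h' =>
    rcases h' with ⟨u, v, huv, rfl, rfl⟩ | ⟨u, v, huv, rfl, rfl⟩ | ⟨u, v, huv, rfl, rfl⟩
    exacts [hc u v huv, hb u v huv, ha u v huv]
  | refl => exact s.iseqv.refl _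
  | symm _ _ _ ih => exact s.iseqv.symm ih
  | trans _ _ _ _ _ ih1 ih2 => exact s.iseqv.trans ih1 ih2

/-- rows 0,1,2 embedding of the `b`/`c` glue. -/
def psi : TVert n → QVert n := fun x => match x with
  | .inl i => q0 i
  | .inr (.inl m) => q1 m
  | .inr (.inr m) => q2 m

/-- rows 0,2,3 embedding of the `a`/`(b∘c)` glue. -/
def phi : TVert n → QVert n := fun x => match x with
  | .inl i => q0 i
  | .inr (.inl m) => q2 m
  | .inr (.inr m) => q3 m

lemma G_to_big {a b c : Setoid (DVert n)} :
    ∀ {x y}, (glue n b c).r x y → (bigGlue a b c).r (psi x) (psi y) := by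
  refine glue_map _ psi ?_ ?_
  · intro u v h
    cases u <;> cases v <;> exact bigGlue_c h
  · intro u v h
    cases u <;> cases v <;> exact bigGlue_b h

lemma K_to_big {a b c : Setoid (DVert n)} :
    ∀ {x y}, (glue n a (pcomp n b c)).r x y → (bigGlue a b c).r (phi x) (phi y) := by
  refine glue_map _ phi ?_ ?_
  · intro u v h
    have h' : (glue n b c).r (embOut n u) (embOut n v) := h
    have := G_to_big (a := a) h'
    cases u <;> cases v <;> exact this
  · intro u v h
    cases u <;> cases v <;> exact bigGlue_a h

lemma L1_fwd {a b c : Setoid (DVert n)} {x y : DVert n}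
    (h : (pcomp n a (pcomp n b c)).r x y) : (bigGlue a b c).r (eO x) (eO y) := by
  have h' : (glue n a (pcomp n b c)).r (embOut n x) (embOut n y) := h
  have := K_to_big h'
  cases x <;> cases y <;> exact this

end SandwichAux
namespace SandwichAux

variable {n : ℕ}

def midT (m : Fin n) : TVert n := Sum.inr (Sum.inl m)

section ERsec

variable (a b c : Setoid (DVert n))

local notation "K" => glue n a (pcomp n b c)
local notation "G" => glue n b c

/-- `u` (a kept vertex) is linked to the excluded row-1 vertex `m`. -/
def Lk (u : TVert n) (m : Fin n) : Prop :=
  ∃ w : DVert n, (K).r u (embBot n w) ∧ (G).r (embOut n w) (midT m)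

/-- two excluded row-1 vertices are linked. -/
def Mm (m k : Fin n) : Prop :=
  (G).r (midT m) (midT k) ∨
  ∃ w w' : DVert n, (G).r (midT m) (embOut n w) ∧
    (K).r (embBot n w) (embBot n w') ∧ (G).r (embOut n w') (midT k)

def tQ : QVert n → (TVert n ⊕ Fin n) := fun x => match x with
  | .inl i => .inl (.inl i)
  | .inr (.inl m) => .inr m
  | .inr (.inr (.inl m)) => .inl (.inr (.inl m))
  | .inr (.inr (.inr m)) => .inl (.inr (.inr m))

def ER' : (TVert n ⊕ Fin n) → (TVert n ⊕ Fin n) → Prop := fun p q =>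
  match p, q with
  | .inl u, .inl v => (K).r u v
  | .inl u, .inr m => Lk a b c u m
  | .inr m, .inl v => Lk a b c v m
  | .inr m, .inr k => Mm a b c m k

def ER (x y : QVert n) : Prop := ER' a b c (tQ x) (tQ y)

variable {a b c}

/-- bridge: a `G`-relation between outer vertices gives a `K`-relation between
the corresponding bottom vertices. -/
lemma brB {w w' : DVert n} (h : (G).r (embOut n w) (embOut n w')) :
    (K).r (embBot n w) (embBot n w') := glue_bot h

lemma lk_of_K {u v : TVert n} {m : Fin n} (h : (K).r u v) (hv : Lk a b c v m) :
    Lk a b c u m := by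
  obtain ⟨w, h1, h2⟩ := hv
  exact ⟨w, (K).iseqv.trans h h1, h2⟩

lemma lk_lk {u v : TVert n} {m : Fin n} (hu : Lk a b c u m) (hv : Lk a b c v m) :
    (K).r u v := by
  obtain ⟨w, h1, h2⟩ := hu
  obtain ⟨w', h1', h2'⟩ := hv
  have : (K).r (embBot n w) (embBot n w') :=
    brB ((G).iseqv.trans h2 ((G).iseqv.symm h2'))
  exact (K).iseqv.trans h1 ((K).iseqv.trans this ((K).iseqv.symm h1'))

lemma lk_mm {u : TVert n} {m k : Fin n} (hu : Lk a b c u m) (hmk : Mm a b c m k) :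
    Lk a b c u k := by
  obtain ⟨w, h1, h2⟩ := hu
  rcases hmk with h | ⟨w1, w2, g1, g2, g3⟩
  · exact ⟨w, h1, (G).iseqv.trans h2 h⟩
  · have hb : (K).r (embBot n w) (embBot n w1) :=
      brB ((G).iseqv.trans h2 g1)
    exact ⟨w2, (K).iseqv.trans h1 ((K).iseqv.trans hb g2), g3⟩

lemma mm_of_lk {u : TVert n} {m k : Fin n} (hm : Lk a b c u m) (hk : Lk a b c u k) :
    Mm a b c m k := by
  obtain ⟨w, h1, h2⟩ := hm
  obtain ⟨w', h1', h2'⟩ := hk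
  exact Or.inr ⟨w, w', (G).iseqv.symm h2,
    (K).iseqv.trans ((K).iseqv.symm h1) h1', h2'⟩

lemma mm_symm {m k : Fin n} (h : Mm a b c m k) : Mm a b c k m := by
  rcases h with h | ⟨w1, w2, g1, g2, g3⟩
  · exact Or.inl ((G).iseqv.symm h)
  · exact Or.inr ⟨w2, w1, (G).iseqv.symm g3, (K).iseqv.symm g2, (G).iseqv.symm g1⟩

lemma mm_trans {m k l : Fin n} (h1 : Mm a b c m k) (h2 : Mm a b c k l) :
    Mm a b c m l := by
  rcases h1 with h1 | ⟨w1, w2, g1, g2, g3⟩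
  · rcases h2 with h2 | ⟨w1, w2, g1, g2, g3⟩
    · exact Or.inl ((G).iseqv.trans h1 h2)
    · exact Or.inr ⟨w1, w2, (G).iseqv.trans h1 g1, g2, g3⟩
  · rcases h2 with h2 | ⟨w3, w4, f1, f2, f3⟩
    · exact Or.inr ⟨w1, w2, g1, g2, (G).iseqv.trans g3 h2⟩
    · have : (K).r (embBot n w2) (embBot n w3) := brB ((G).iseqv.trans g3 f1)
      exact Or.inr ⟨w1, w4, g1,
        (K).iseqv.trans g2 ((K).iseqv.trans this f2), f3⟩

lemma mm_refl (m : Fin n) : Mm a b c m m := Or.inl ((G).iseqv.refl _)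

variable (a b c)

lemma ER_equiv : Equivalence (ER a b c) := by
  constructor
  · intro x
    show ER' a b c (tQ x) (tQ x)
    rcases tQ x with u | m
    · exact (K).iseqv.refl u
    · exact mm_refl m
  · intro x y h
    show ER' a b c (tQ y) (tQ x)
    have h' : ER' a b c (tQ x) (tQ y) := h
    clear h
    revert h'
    rcases tQ x with u | m <;> rcases tQ y with v | k <;> intro h'
    · exact (K).iseqv.symm h'
    · exact h'
    · exact h'
    · exact mm_symm h'
  · intro x y z h1 h2
    show ER' a b c (tQ x) (tQ z)
    have h1' : ER' a b c (tQ x) (tQ y) := h1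
    have h2' : ER' a b c (tQ y) (tQ z) := h2
    clear h1 h2
    revert h1' h2'
    rcases tQ x with u | m <;> rcases tQ y with v | k <;> rcases tQ z with w | l <;>
      intro h1' h2'
    · exact (K).iseqv.trans h1' h2'
    · exact lk_of_K h1' h2'
    · exact lk_lk h1' h2'
    · exact lk_mm h1' h2'
    · exact lk_of_K ((K).iseqv.symm h2') h1'
    · exact mm_of_lk h1' h2'
    · exact lk_mm h2' (mm_symm h1')
    · exact mm_trans h1' h2'

def ERSetoid : Setoid (QVert n) := ⟨ER a b c, ER_equiv a b c⟩

variable {a b c}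

lemma bigGen_le_ER : ∀ x y, bigGen a b c x y → ER a b c x y := by
  rintro x y (⟨u, v, huv, rfl, rfl⟩ | ⟨u, v, huv, rfl, rfl⟩ | ⟨u, v, huv, rfl, rfl⟩)
  · -- c-edges, rows 0-1
    rcases u with i | m <;> rcases v with j | k
    · -- (inl i, inl j) : K-relation between bottoms
      have hg : (glue n b c).r (embOut n (Sum.inl i : DVert n)) (embOut n (Sum.inl j : DVert n)) :=
        glue_bot huv
      exact brB hg
    · -- (inl i, inr k) : Lk (bot i) k
      have hg : (glue n b c).r (embOut n (Sum.inl i : DVert n)) (midT k) := glue_bot huv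
      exact ⟨Sum.inl i, (K).iseqv.refl _, hg⟩
    · -- (inr m, inl j)
      have hg : (glue n b c).r (embOut n (Sum.inl j : DVert n)) (midT m) :=
        glue_bot (c.iseqv.symm huv)
      exact ⟨Sum.inl j, (K).iseqv.refl _, hg⟩
    · -- (inr m, inr k) : Mm
      have hg : (glue n b c).r (midT m) (midT k) := glue_bot huv
      exact Or.inl hg
  · -- b-edges, rows 1-2
    rcases u with i | m <;> rcases v with j | k
    · -- (inl i, inl j) : Mm via top edges of G
      have hg : (glue n b c).r (midT i) (midT j) := glue_top huv
      exact Or.inl hg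
    · -- (inl i, inr k) : x = q1 i, y = q2 k : Lk (midT k) i
      have hg : (glue n b c).r (embOut n (Sum.inr k : DVert n)) (midT i) :=
        glue_top (b.iseqv.symm huv)
      exact ⟨Sum.inr k, (K).iseqv.refl _, hg⟩
    · -- (inr m, inl j) : x = q2 m, y = q1 j : Lk (midT m) j
      have hg : (glue n b c).r (embOut n (Sum.inr m : DVert n)) (midT j) := glue_top huv
      exact ⟨Sum.inr m, (K).iseqv.refl _, hg⟩
    · -- (inr m, inr k) : K between middles
      have hg : (glue n b c).r (embOut n (Sum.inr m : DVert n)) (embOut n (Sum.inr k : DVert n)) :=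
        glue_top huv
      exact brB hg
  · -- a-edges, rows 2-3 : K top edges
    rcases u with i | m <;> rcases v with j | k
    · have hg : (glue n a (pcomp n b c)).r (embTop n (Sum.inl i : DVert n))
        (embTop n (Sum.inl j : DVert n)) := glue_top huv
      exact hg
    · have hg : (glue n a (pcomp n b c)).r (embTop n (Sum.inl i : DVert n))
        (embTop n (Sum.inr k : DVert n)) := glue_top huv
      exact hg
    · have hg : (glue n a (pcomp n b c)).r (embTop n (Sum.inr m : DVert n))
        (embTop n (Sum.inl j : DVert n)) := glue_top huv
      exact hg
    · have hg : (glue n a (pcomp n b c)).r (embTop n (Sum.inr m : DVert n))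
        (embTop n (Sum.inr k : DVert n)) := glue_top huv
      exact hg

lemma L1_bwd {x y : DVert n} (h : (bigGlue a b c).r (eO x) (eO y)) :
    (pcomp n a (pcomp n b c)).r x y := by
  have h' : ER a b c (eO x) (eO y) :=
    eqvGen_imp (ERSetoid a b c) bigGen_le_ER h
  cases x <;> cases y <;> exact h'

variable (a b c) in
def Rset : Setoid (DVert n) where
  r x y := (bigGlue a b c).r (eO x) (eO y)
  iseqv := ⟨fun _ => (bigGlue a b c).iseqv.refl _, fun h => (bigGlue a b c).iseqv.symm h,
    fun h1 h2 => (bigGlue a b c).iseqv.trans h1 h2⟩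

lemma L1 : pcomp n a (pcomp n b c) = Rset a b c :=
  Setoid.ext fun _ _ => ⟨L1_fwd, L1_bwd⟩

end ERsec

/-! ### flip symmetry of the 4-row glue, and associativity -/

def QFlip : QVert n → QVert n := fun x => match x with
  | .inl i => q3 i
  | .inr (.inl m) => q2 m
  | .inr (.inr (.inl m)) => q1 m
  | .inr (.inr (.inr i)) => q0 i

lemma QFlip_e01 (u : DVert n) : QFlip (e01 u) = e23 u.swap := by cases u <;> rfl
lemma QFlip_e12 (u : DVert n) : QFlip (e12 u) = e12 u.swap := by cases u <;> rfl
lemma QFlip_e23 (u : DVert n) : QFlip (e23 u) = e01 u.swap := by cases u <;> rfl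
lemma QFlip_eO (u : DVert n) : QFlip (eO u) = eO u.swap := by cases u <;> rfl

lemma bigGlue_flip {a b c : Setoid (DVert n)} :
    ∀ {x y}, (bigGlue a b c).r x y →
      (bigGlue (pstar n c) (pstar n b) (pstar n a)).r (QFlip x) (QFlip y) := by
  refine bigGlue_map _ QFlip ?_ ?_ ?_
  · intro u v h
    rw [QFlip_e01, QFlip_e01]
    exact bigGlue_a (pstar_r h)
  · intro u v h
    rw [QFlip_e12, QFlip_e12]
    exact bigGlue_b (pstar_r h)
  · intro u v h
    rw [QFlip_e23, QFlip_e23]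
    exact bigGlue_c (pstar_r h)

lemma pstar_Rset (a b c : Setoid (DVert n)) :
    pstar n (Rset (pstar n c) (pstar n b) (pstar n a)) = Rset a b c := by
  apply Setoid.ext
  intro x y
  show (bigGlue (pstar n c) (pstar n b) (pstar n a)).r (eO x.swap) (eO y.swap) ↔
    (bigGlue a b c).r (eO x) (eO y)
  constructor
  · intro h
    have := bigGlue_flip h
    rw [pstar_pstar, pstar_pstar, pstar_pstar] at this
    rwa [QFlip_eO, QFlip_eO, Sum.swap_swap, Sum.swap_swap] at this
  · intro h
    have := bigGlue_flip h
    rwa [QFlip_eO, QFlip_eO] at this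

lemma pcomp_assoc (a b c : Setoid (DVert n)) :
    pcomp n (pcomp n a b) c = pcomp n a (pcomp n b c) := by
  have h3 : pstar n (pcomp n (pstar n c) (pcomp n (pstar n b) (pstar n a))) =
      pcomp n (pcomp n a b) c := by
    rw [pstar_pcomp, pstar_pcomp, pstar_pstar, pstar_pstar, pstar_pstar]
  rw [← h3, L1, pstar_Rset, L1]

end SandwichAux
namespace SandwichAux

variable {n : ℕ}

def propg (a : Setoid (DVert n)) (i : Fin n) : Prop := ∃ m, a.r (Sum.inl i) (Sum.inr m)

def piP : TVert n → DVert n := fun x => match x with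
  | .inl i => Sum.inl i
  | .inr (.inl m) => Sum.inr m
  | .inr (.inr m) => Sum.inl m

def isBotV (u : TVert n) : Prop := ∃ i : Fin n, u = Sum.inl i
def isTopV (u : TVert n) : Prop := ∃ i : Fin n, u = Sum.inr (Sum.inr i)

def E7 (a : Setoid (DVert n)) (u v : TVert n) : Prop :=
  a.r (piP u) (piP v) ∧
    ((isBotV u ∧ isTopV v) ∨ (isTopV u ∧ isBotV v) → ∃ m, a.r (piP u) (Sum.inr m))

lemma E7_equiv (a : Setoid (DVert n)) : Equivalence (E7 a) := by
  constructor
  · intro u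
    refine ⟨a.iseqv.refl _, ?_⟩
    rintro (⟨⟨i, rfl⟩, ⟨m, hm⟩⟩ | ⟨⟨m, rfl⟩, ⟨i, hi⟩⟩)
    · exact absurd hm (by simp)
    · exact absurd hi (by simp)
  · intro u v h
    obtain ⟨h1, h2⟩ := h
    refine ⟨a.iseqv.symm h1, ?_⟩
    intro hmix
    obtain ⟨m, hm⟩ := h2 (by tauto)
    exact ⟨m, a.iseqv.trans (a.iseqv.symm h1) hm⟩
  · intro u v w hu hv
    obtain ⟨h1, h2⟩ := hu
    obtain ⟨h3, h4⟩ := hv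
    refine ⟨a.iseqv.trans h1 h3, ?_⟩
    intro hmix
    rcases v with i | vm
    · rcases hmix with ⟨hu', hw'⟩ | ⟨hu', hw'⟩
      · obtain ⟨m, hm⟩ := h4 (Or.inl ⟨⟨i, rfl⟩, hw'⟩)
        exact ⟨m, a.iseqv.trans h1 hm⟩
      · exact h2 (Or.inr ⟨hu', ⟨i, rfl⟩⟩)
    · rcases vm with m | m
      · exact ⟨m, h1⟩
      · rcases hmix with ⟨hu', hw'⟩ | ⟨hu', hw'⟩
        · exact h2 (Or.inl ⟨hu', ⟨m, rfl⟩⟩)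
        · obtain ⟨k, hk⟩ := h4 (Or.inr ⟨⟨m, rfl⟩, hw'⟩)
          exact ⟨k, a.iseqv.trans h1 hk⟩

lemma glue_le_E7 (a : Setoid (DVert n)) :
    ∀ {x y}, (glue n (pstar n a) a).r x y → E7 a x y := by
  refine glue_map (⟨E7 a, E7_equiv a⟩ : Setoid (TVert n)) id ?_ ?_
  · rintro (i | m) (j | k) h <;>
      exact ⟨h, by rintro (⟨-, ⟨m', hm'⟩⟩ | ⟨⟨m', hm'⟩, -⟩) <;>
        exact absurd hm' (by simp [embBot])⟩
  · rintro (i | m) (j | k) h <;>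
      exact ⟨h, by rintro (⟨⟨i', hi'⟩, -⟩ | ⟨-, ⟨i', hi'⟩⟩) <;>
        exact absurd hi' (by simp [embTop])⟩

lemma charSS_ll (a : Setoid (DVert n)) (i j : Fin n) :
    (pcomp n (pstar n a) a).r (Sum.inl i) (Sum.inl j) ↔ a.r (Sum.inl i) (Sum.inl j) := by
  constructor
  · intro h
    have h' : (glue n (pstar n a) a).r (embOut n (Sum.inl i : DVert n))
      (embOut n (Sum.inl j : DVert n)) := h
    exact (glue_le_E7 a h').1
  · intro h
    have hg : (glue n (pstar n a) a).r (embBot n (Sum.inl i : DVert n))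
      (embBot n (Sum.inl j : DVert n)) := glue_bot h
    exact hg

lemma charSS_rr (a : Setoid (DVert n)) (i j : Fin n) :
    (pcomp n (pstar n a) a).r (Sum.inr i) (Sum.inr j) ↔ a.r (Sum.inl i) (Sum.inl j) := by
  constructor
  · intro h
    have h' : (glue n (pstar n a) a).r (embOut n (Sum.inr i : DVert n))
      (embOut n (Sum.inr j : DVert n)) := h
    exact (glue_le_E7 a h').1
  · intro h
    have hs : (pstar n a).r (Sum.inr i : DVert n) (Sum.inr j) := h
    have hg : (glue n (pstar n a) a).r (embTop n (Sum.inr i : DVert n))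
      (embTop n (Sum.inr j : DVert n)) := glue_top hs
    exact hg

lemma charSS_lr (a : Setoid (DVert n)) (i j : Fin n) :
    (pcomp n (pstar n a) a).r (Sum.inl i) (Sum.inr j) ↔
      a.r (Sum.inl i) (Sum.inl j) ∧ propg a i := by
  constructor
  · intro h
    have h' : (glue n (pstar n a) a).r (embOut n (Sum.inl i : DVert n))
      (embOut n (Sum.inr j : DVert n)) := h
    have he := glue_le_E7 a h'
    exact ⟨he.1, he.2 (Or.inl ⟨⟨i, rfl⟩, ⟨j, rfl⟩⟩)⟩
  · rintro ⟨hij, m, him⟩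
    have s1 : (glue n (pstar n a) a).r (embBot n (Sum.inl i : DVert n))
      (embBot n (Sum.inr m : DVert n)) := glue_bot him
    have hs2 : (pstar n a).r (Sum.inl m : DVert n) (Sum.inr i) := a.iseqv.symm him
    have s2 : (glue n (pstar n a) a).r (embTop n (Sum.inl m : DVert n))
      (embTop n (Sum.inr i : DVert n)) := glue_top hs2
    have hs3 : (pstar n a).r (Sum.inr i : DVert n) (Sum.inr j) := hij
    have s3 : (glue n (pstar n a) a).r (embTop n (Sum.inr i : DVert n))
      (embTop n (Sum.inr j : DVert n)) := glue_top hs3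
    have : (glue n (pstar n a) a).r (embOut n (Sum.inl i : DVert n))
        (embOut n (Sum.inr j : DVert n)) :=
      (glue n (pstar n a) a).iseqv.trans s1
        ((glue n (pstar n a) a).iseqv.trans s2 s3)
    exact this

lemma rel_comm {X : Type*} (s : Setoid X) {x y : X} : s.r x y ↔ s.r y x :=
  ⟨s.iseqv.symm, s.iseqv.symm⟩

lemma charSS_rl (a : Setoid (DVert n)) (i j : Fin n) :
    (pcomp n (pstar n a) a).r (Sum.inr i) (Sum.inl j) ↔
      a.r (Sum.inl j) (Sum.inl i) ∧ propg a j :=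
  (rel_comm _).trans (charSS_lr a j i)

lemma proj_eq (a b : Setoid (DVert n))
    (h1 : ∀ i j, a.r (Sum.inl i) (Sum.inl j) ↔ b.r (Sum.inl i) (Sum.inl j))
    (h2 : ∀ i, propg a i ↔ propg b i) :
    pcomp n (pstar n a) a = pcomp n (pstar n b) b := by
  apply Setoid.ext
  rintro (i | i) (j | j)
  · rw [charSS_ll, charSS_ll, h1]
  · rw [charSS_lr, charSS_lr, h1, h2]
  · rw [charSS_rl, charSS_rl, h1, h2]
  · rw [charSS_rr, charSS_rr, h1]

def pi2 : TVert n → DVert n := fun x => match x with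
  | .inl i => Sum.inl i
  | .inr (.inl m) => Sum.inl m
  | .inr (.inr m) => Sum.inr m

lemma pcomp_proj (a : Setoid (DVert n)) :
    pcomp n a (pcomp n (pstar n a) a) = a := by
  apply Setoid.ext
  intro x y
  constructor
  · intro h
    have h' : (glue n a (pcomp n (pstar n a) a)).r (embOut n x) (embOut n y) := h
    have key : ∀ {u v}, (glue n a (pcomp n (pstar n a) a)).r u v → a.r (pi2 u) (pi2 v) := by
      refine glue_map a pi2 ?_ ?_
      · rintro (i | m) (j | k) h
        · exact (charSS_ll a i j).mp h
        · exact ((charSS_lr a i k).mp h).1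
        · exact a.iseqv.symm ((charSS_lr a j m).mp ((pcomp n (pstar n a) a).iseqv.symm h)).1
        · exact (charSS_rr a m k).mp h
      · rintro (i | m) (j | k) h <;> exact h
    have := key h'
    cases x <;> cases y <;> exact this
  · intro h
    rcases x with i | i <;> rcases y with j | j
    · have hp : (pcomp n (pstar n a) a).r (Sum.inl i : DVert n) (Sum.inl j) :=
        (charSS_ll a i j).mpr h
      have hg : (glue n a (pcomp n (pstar n a) a)).r (embBot n (Sum.inl i : DVert n))
        (embBot n (Sum.inl j : DVert n)) := glue_bot hp
      exact hg
    · have hp : (pcomp n (pstar n a) a).r (Sum.inl i : DVert n) (Sum.inr i) :=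
        (charSS_lr a i i).mpr ⟨a.iseqv.refl _, ⟨j, h⟩⟩
      have s1 : (glue n a (pcomp n (pstar n a) a)).r (embBot n (Sum.inl i : DVert n))
        (embBot n (Sum.inr i : DVert n)) := glue_bot hp
      have s2 : (glue n a (pcomp n (pstar n a) a)).r (embTop n (Sum.inl i : DVert n))
        (embTop n (Sum.inr j : DVert n)) := glue_top h
      exact (glue n a (pcomp n (pstar n a) a)).iseqv.trans s1 s2
    · have h' : a.r (Sum.inl j : DVert n) (Sum.inr i) := a.iseqv.symm h
      have hp : (pcomp n (pstar n a) a).r (Sum.inl j : DVert n) (Sum.inr j) :=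
        (charSS_lr a j j).mpr ⟨a.iseqv.refl _, ⟨i, h'⟩⟩
      have s1 : (glue n a (pcomp n (pstar n a) a)).r (embBot n (Sum.inl j : DVert n))
        (embBot n (Sum.inr j : DVert n)) := glue_bot hp
      have s2 : (glue n a (pcomp n (pstar n a) a)).r (embTop n (Sum.inl j : DVert n))
        (embTop n (Sum.inr i : DVert n)) := glue_top h'
      exact (glue n a (pcomp n (pstar n a) a)).iseqv.symm
        ((glue n a (pcomp n (pstar n a) a)).iseqv.trans s1 s2)
    · have hg : (glue n a (pcomp n (pstar n a) a)).r (embTop n (Sum.inr i : DVert n))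
        (embTop n (Sum.inr j : DVert n)) := glue_top h
      exact hg

lemma pcomp_reg (a : Setoid (DVert n)) :
    pcomp n (pcomp n a (pstar n a)) a = a := by
  rw [pcomp_assoc, pcomp_proj]

end SandwichAux
namespace SandwichAux

variable {n : ℕ}

lemma propg_of_rel {ι : Setoid (DVert n)} {i j : Fin n}
    (h : ι.r (Sum.inl i) (Sum.inl j)) (hj : propg ι j) : propg ι i := by
  obtain ⟨m, hm⟩ := hj
  exact ⟨m, ι.iseqv.trans h hm⟩

def E10 (ι : Setoid (DVert n)) : TVert n → TVert n → Prop := fun u v =>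
  match u, v with
  | .inl i, .inl j => ι.r (Sum.inl i) (Sum.inl j) ∨ (propg ι i ∧ propg ι j)
  | .inl i, _ => propg ι i
  | _, .inl j => propg ι j
  | _, _ => True

lemma E10_equiv (ι : Setoid (DVert n)) : Equivalence (E10 ι) := by
  constructor
  · rintro (i | u)
    · exact Or.inl (ι.iseqv.refl _)
    · trivial
  · rintro (i | u) (j | v) h
    · rcases h with h | ⟨h1, h2⟩
      · exact Or.inl (ι.iseqv.symm h)
      · exact Or.inr ⟨h2, h1⟩
    · exact h
    · exact h
    · trivial
  · rintro (i | u) (j | v) (k | w) h1 h2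
    · rcases h1 with h1 | ⟨p1, p2⟩
      · rcases h2 with h2 | ⟨p2, p3⟩
        · exact Or.inl (ι.iseqv.trans h1 h2)
        · exact Or.inr ⟨propg_of_rel h1 p2, p3⟩
      · rcases h2 with h2 | ⟨p2', p3⟩
        · exact Or.inr ⟨p1, propg_of_rel (ι.iseqv.symm h2) p2⟩
        · exact Or.inr ⟨p1, p3⟩
    · rcases h1 with h1 | ⟨p1, p2⟩
      · exact propg_of_rel h1 h2
      · exact p1
    · exact Or.inr ⟨h1, h2⟩
    · exact h1
    · rcases h2 with h2 | ⟨p1, p2⟩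
      · exact propg_of_rel (ι.iseqv.symm h2) h1
      · exact p2
    · trivial
    · exact h2
    · trivial

lemma glueRI_le_E10 (ρ ι : Setoid (DVert n)) :
    ∀ {x y}, (glue n ρ ι).r x y → E10 ι x y := by
  refine glue_map (⟨E10 ι, E10_equiv ι⟩ : Setoid (TVert n)) id ?_ ?_
  · rintro (i | m) (j | k) h
    · exact Or.inl h
    · exact ⟨k, h⟩
    · exact ⟨m, ι.iseqv.symm h⟩
    · trivial
  · rintro (i | m) (j | k) h <;> trivial

lemma P1 {ρ ι : Setoid (DVert n)} {i m : Fin n}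
    (h : (pcomp n ρ ι).r (Sum.inl i) (Sum.inr m)) : propg ι i := by
  have h' : (glue n ρ ι).r (embOut n (Sum.inl i : DVert n))
    (embOut n (Sum.inr m : DVert n)) := h
  exact glueRI_le_E10 ρ ι h'

lemma P2 {ρ ι : Setoid (DVert n)} {i j : Fin n}
    (h : (pcomp n ρ ι).r (Sum.inl i) (Sum.inl j)) :
    ι.r (Sum.inl i) (Sum.inl j) ∨ (propg ι i ∧ propg ι j) := by
  have h' : (glue n ρ ι).r (embOut n (Sum.inl i : DVert n))
    (embOut n (Sum.inl j : DVert n)) := h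
  exact glueRI_le_E10 ρ ι h'

lemma bot_incl {ρ ι : Setoid (DVert n)} {i j : Fin n}
    (h : ι.r (Sum.inl i) (Sum.inl j)) :
    (pcomp n ρ ι).r (Sum.inl i) (Sum.inl j) := by
  have hg : (glue n ρ ι).r (embBot n (Sum.inl i : DVert n))
    (embBot n (Sum.inl j : DVert n)) := glue_bot h
  exact hg

lemma rel_of_mem_class {X : Type*} {s : Setoid X} {C : Set X} (hC : C ∈ s.classes)
    {x y : X} (hx : x ∈ C) (hy : y ∈ C) : s.r x y := by
  obtain ⟨w, rfl⟩ := hC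
  have hx' : s.r x w := hx
  have hy' : s.r y w := hy
  exact s.iseqv.trans hx' (s.iseqv.symm hy')

lemma class_eq' {X : Type*} {s : Setoid X} {C : Set X} (hC : C ∈ s.classes)
    {x : X} (hx : x ∈ C) : C = {z | s.r z x} := by
  obtain ⟨w, rfl⟩ := hC
  have hx' : s.r x w := hx
  ext z
  constructor
  · intro hz
    have hz' : s.r z w := hz
    exact s.iseqv.trans hz' (s.iseqv.symm hx')
  · intro hz
    have hz' : s.r z x := hz
    show s.r z w
    exact s.iseqv.trans hz' hx'

lemma mem_class_self {X : Type*} (s : Setoid X) (x : X) : x ∈ {z | s.r z x} :=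
  s.iseqv.refl x

def Pprop (s : Setoid (DVert n)) : Set (Set (DVert n)) := {C ∈ s.classes | IsPropagating C}

lemma prank_eq (s : Setoid (DVert n)) : prank n s = (Pprop s).ncard := rfl

section Counting

variable (ρ ι : Setoid (DVert n))
variable (hr : prank n (pcomp n ρ ι) = prank n ι)

local notation "σ" => pcomp n ρ ι
local notation "Pσ" => Pprop (pcomp n ρ ι)
local notation "Pι" => Pprop ι

/-- the chosen unprimed index of a propagating class -/
noncomputable def pickL (C : Set (DVert n)) (h : ∃ i, Sum.inl i ∈ C) : Fin n := h.choose

include hr in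
lemma propg_down {i : Fin n} (hi : propg ι i) : propg (pcomp n ρ ι) i := by
  classical
  -- the injection from propagating σ-classes to propagating ι-classes
  set f : ∀ C ∈ Pσ, Set (DVert n) :=
    fun C hC => {z | ι.r z (Sum.inl (pickL C hC.2.1))} with hf_def
  have hf : ∀ (C) (hC : C ∈ Pσ), f C hC ∈ Pι := by
    intro C hC
    have hiC : Sum.inl (pickL C hC.2.1) ∈ C := hC.2.1.choose_spec
    refine ⟨⟨Sum.inl (pickL C hC.2.1), rfl⟩, ⟨pickL C hC.2.1, ι.iseqv.refl _⟩, ?_⟩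
    obtain ⟨m', hm'⟩ := hC.2.2
    have hrel : (σ).r (Sum.inl (pickL C hC.2.1)) (Sum.inr m') :=
      rel_of_mem_class hC.1 hiC hm'
    obtain ⟨m, hm⟩ := P1 hrel
    exact ⟨m, ι.iseqv.symm hm⟩
  have hinj : ∀ C₁ C₂ (h₁ : C₁ ∈ Pσ) (h₂ : C₂ ∈ Pσ), f C₁ h₁ = f C₂ h₂ → C₁ = C₂ := by
    intro C₁ C₂ h₁ h₂ heq
    have m1 : Sum.inl (pickL C₁ h₁.2.1) ∈ f C₁ h₁ := ι.iseqv.refl _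
    rw [heq] at m1
    have hrel : ι.r (Sum.inl (pickL C₁ h₁.2.1)) (Sum.inl (pickL C₂ h₂.2.1)) := m1
    have hrelσ := bot_incl (ρ := ρ) hrel
    have hC₂ := class_eq' h₂.1 h₂.2.1.choose_spec
    have hmem : Sum.inl (pickL C₁ h₁.2.1) ∈ C₂ := by rw [hC₂]; exact hrelσ
    exact Setoid.eq_of_mem_classes h₁.1 h₁.2.1.choose_spec h₂.1 hmem
  have hsurj := Set.surj_on_of_inj_on_of_ncard_le f hf hinj (by rw [← prank_eq, ← prank_eq]; exact hr.symm.le) (Set.toFinite _)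
  -- apply surjectivity to the ι-class of `Sum.inl i`
  obtain ⟨m₀, hm₀⟩ := hi
  have hB : {z | ι.r z (Sum.inl i)} ∈ Pι := by
    refine ⟨Setoid.mem_classes ι _, ⟨i, ι.iseqv.refl _⟩, ⟨m₀, ι.iseqv.symm hm₀⟩⟩
  obtain ⟨C, hC, hBC⟩ := hsurj _ hB
  have hiC : Sum.inl (pickL C hC.2.1) ∈ C := hC.2.1.choose_spec
  have m1 : Sum.inl i ∈ f C hC := by rw [← hBC]; exact ι.iseqv.refl _
  have hrel : ι.r (Sum.inl i) (Sum.inl (pickL C hC.2.1)) := m1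
  have hmem : Sum.inl i ∈ C := by
    rw [class_eq' hC.1 hiC]
    exact bot_incl (ρ := ρ) hrel
  obtain ⟨m, hm⟩ := hC.2.2
  exact ⟨m, rel_of_mem_class hC.1 hmem hm⟩

include hr in
lemma bot_eq {i j : Fin n} (h : (pcomp n ρ ι).r (Sum.inl i) (Sum.inl j)) :
    ι.r (Sum.inl i) (Sum.inl j) := by
  classical
  rcases P2 h with h' | ⟨pi, pj⟩
  · exact h'
  -- second counting: g : Pι → Pσ is surjective, hence injective
  set g : ∀ B ∈ Pι, Set (DVert n) :=
    fun B hB => {z | (σ).r z (Sum.inl (pickL B hB.2.1))} with hg_def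
  have hg : ∀ (B) (hB : B ∈ Pι), g B hB ∈ Pσ := by
    intro B hB
    have hiB : Sum.inl (pickL B hB.2.1) ∈ B := hB.2.1.choose_spec
    refine ⟨Setoid.mem_classes _ _, ⟨pickL B hB.2.1, (σ).iseqv.refl _⟩, ?_⟩
    obtain ⟨m', hm'⟩ := hB.2.2
    have hpι : propg ι (pickL B hB.2.1) := ⟨m', rel_of_mem_class hB.1 hiB hm'⟩
    obtain ⟨m, hm⟩ := propg_down ρ ι hr hpι
    exact ⟨m, (σ).iseqv.symm hm⟩
  have hgsurj : ∀ D ∈ Pσ, ∃ B hB, g B hB = D := by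
    intro D hD
    have hkD : Sum.inl (pickL D hD.2.1) ∈ D := hD.2.1.choose_spec
    set k := pickL D hD.2.1 with hk
    obtain ⟨m', hm'⟩ := hD.2.2
    have hpσ : propg (σ) k := ⟨m', rel_of_mem_class hD.1 hkD hm'⟩
    obtain ⟨m₁, hm₁⟩ := P1 hpσ.choose_spec
    have hpι : propg ι k := P1 hpσ.choose_spec
    have hB : {z | ι.r z (Sum.inl k)} ∈ Pι := by
      obtain ⟨m₂, hm₂⟩ := hpι
      exact ⟨Setoid.mem_classes ι _, ⟨k, ι.iseqv.refl _⟩, ⟨m₂, ι.iseqv.symm hm₂⟩⟩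
    refine ⟨_, hB, ?_⟩
    have hi₁ : Sum.inl (pickL _ hB.2.1) ∈ {z | ι.r z (Sum.inl k)} := hB.2.1.choose_spec
    have hrel : ι.r (Sum.inl (pickL _ hB.2.1)) (Sum.inl k) := hi₁
    have hrelσ := bot_incl (ρ := ρ) hrel
    have hDeq : D = {z | (σ).r z (Sum.inl k)} := class_eq' hD.1 hkD
    rw [hDeq]
    ext z
    constructor
    · intro hz
      have hz' : (σ).r z (Sum.inl (pickL _ hB.2.1)) := hz
      exact (σ).iseqv.trans hz' hrelσ
    · intro hz
      have hz' : (σ).r z (Sum.inl k) := hz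
      exact (σ).iseqv.trans hz' ((σ).iseqv.symm hrelσ)
  -- now apply injectivity to the classes of i and j
  obtain ⟨mi, hmi⟩ := pi
  obtain ⟨mj, hmj⟩ := pj
  have hBi : {z | ι.r z (Sum.inl i)} ∈ Pι :=
    ⟨Setoid.mem_classes ι _, ⟨i, ι.iseqv.refl _⟩, ⟨mi, ι.iseqv.symm hmi⟩⟩
  have hBj : {z | ι.r z (Sum.inl j)} ∈ Pι :=
    ⟨Setoid.mem_classes ι _, ⟨j, ι.iseqv.refl _⟩, ⟨mj, ι.iseqv.symm hmj⟩⟩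
  have hgi : g _ hBi = {z | (σ).r z (Sum.inl i)} := by
    have hmem : Sum.inl (pickL _ hBi.2.1) ∈ {z | ι.r z (Sum.inl i)} := hBi.2.1.choose_spec
    have hrel : ι.r (Sum.inl (pickL _ hBi.2.1)) (Sum.inl i) := hmem
    have hrelσ := bot_incl (ρ := ρ) hrel
    ext z
    constructor
    · intro hz
      have hz' : (σ).r z (Sum.inl (pickL _ hBi.2.1)) := hz
      exact (σ).iseqv.trans hz' hrelσ
    · intro hz
      have hz' : (σ).r z (Sum.inl i) := hz
      exact (σ).iseqv.trans hz' ((σ).iseqv.symm hrelσ)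
  have hgj : g _ hBj = {z | (σ).r z (Sum.inl j)} := by
    have hmem : Sum.inl (pickL _ hBj.2.1) ∈ {z | ι.r z (Sum.inl j)} := hBj.2.1.choose_spec
    have hrel : ι.r (Sum.inl (pickL _ hBj.2.1)) (Sum.inl j) := hmem
    have hrelσ := bot_incl (ρ := ρ) hrel
    ext z
    constructor
    · intro hz
      have hz' : (σ).r z (Sum.inl (pickL _ hBj.2.1)) := hz
      exact (σ).iseqv.trans hz' hrelσ
    · intro hz
      have hz' : (σ).r z (Sum.inl j) := hz
      exact (σ).iseqv.trans hz' ((σ).iseqv.symm hrelσ)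
  have hclseq : {z | (σ).r z (Sum.inl i)} = {z | (σ).r z (Sum.inl j)} := by
    ext z
    constructor
    · intro hz
      have hz' : (σ).r z (Sum.inl i) := hz
      exact (σ).iseqv.trans hz' h
    · intro hz
      have hz' : (σ).r z (Sum.inl j) := hz
      exact (σ).iseqv.trans hz' ((σ).iseqv.symm h)
  have : ({z | ι.r z (Sum.inl i)} : Set (DVert n)) = {z | ι.r z (Sum.inl j)} := by
    refine Set.inj_on_of_surj_on_of_ncard_le g hg hgsurj
      (by rw [← prank_eq, ← prank_eq]; exact hr.ge) hBi hBj ?_ (Set.toFinite _)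
    rw [hgi, hgj, hclseq]
  have : Sum.inl i ∈ {z | ι.r z (Sum.inl j)} := by rw [← this]; exact ι.iseqv.refl _
  exact this

omit hr in
lemma propg_up {i : Fin n} (hi : propg (pcomp n ρ ι) i) : propg ι i :=
  P1 hi.choose_spec

end Counting

end SandwichAux
open SandwichAux

/-- for `ι` `⋆`-self-dual with `r(ρ∘ι) = r(ι)`, one has
`(ρ∘ι∘ρ⋆)∘(ρ∘ι∘ρ⋆)∘ρ∘ι = ρ∘ι`. -/
theorem sandwich_identity (n : ℕ) (ρ ι : Setoid (DVert n))
    (hι : pstar n ι = ι) (hr : prank n (pcomp n ρ ι) = prank n ι) :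
    pcomp n (pcomp n (pcomp n (pcomp n ρ ι) (pstar n ρ))
        (pcomp n (pcomp n ρ ι) (pstar n ρ))) (pcomp n ρ ι) = pcomp n ρ ι := by
  have hps : pstar n (pcomp n ρ ι) = pcomp n ι (pstar n ρ) := by
    rw [pstar_pcomp, hι]
  have h1 : ∀ i j, (pcomp n ρ ι).r (Sum.inl i) (Sum.inl j) ↔ ι.r (Sum.inl i) (Sum.inl j) :=
    fun i j => ⟨bot_eq ρ ι hr, bot_incl⟩
  have h2 : ∀ i, propg (pcomp n ρ ι) i ↔ propg ι i :=
    fun i => ⟨propg_up ρ ι, propg_down ρ ι hr⟩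
  have hK : pcomp n (pstar n (pcomp n ρ ι)) (pcomp n ρ ι) = pcomp n ι ι := by
    rw [proj_eq (pcomp n ρ ι) ι h1 h2, hι]
  have hKleft : pcomp n (pcomp n (pcomp n ι (pstar n ρ)) ρ) ι = pcomp n ι ι := by
    rw [pcomp_assoc, ← hps, hK]
  have hA : pcomp n ι (pcomp n (pstar n ρ) (pcomp n ρ ι)) = pcomp n ι ι := by
    rw [← pcomp_assoc, ← pcomp_assoc]
    exact hKleft
  have hB : pcomp n ι (pcomp n (pstar n ρ) (pcomp n ρ (pcomp n ι ι))) =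
      pcomp n ι (pcomp n ι ι) := by
    have := congrArg (fun z => pcomp n z ι) hKleft
    simp only [pcomp_assoc] at this
    exact this
  have hC := pcomp_reg (pcomp n ρ ι)
  rw [hps] at hC
  simp only [pcomp_assoc] at hC
  rw [hA] at hC
  simp only [pcomp_assoc]
  rw [hA, hB]
  exact hC

end
end

section
/- Let τ ∈ Pₙ be the partition {1,1'} ∪ {2,2'} ∪ ... ∪ {k-1,(k-1)'} ∪ {k, k+1,...,n, k',(k+1)',...,n'} (for 1 ≤ k ≤ n). Then τ = τ⋆, τ ∘ τ = τ, c(τ,τ) = 0, and the set H of diagrams ρ of rank k with τ ∘ ρ = ρ = ρ ∘ τ is a group under ∘ isomorphic to the symmetric group S_k, with identity element τ. -/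
open scoped Classical
open Relation
noncomputable section

/-- The index of a vertex, forgetting whether it is primed. -/
def vidx {n : ℕ} (x : DVert n) : ℕ := Sum.elim Fin.val Fin.val x

/-- The diagram `{1,1'} ∪ ⋯ ∪ {k-1,(k-1)'} ∪ {k,…,n,k',…,n'}` of `Pₙ`
(0-indexed: parts `{i,i'}` for `i < k-1` and one big part on indices `≥ k-1`). -/
def tauP (n k : ℕ) : Setoid (DVert n) where
  r x y := vidx x = vidx y ∨ (k - 1 ≤ vidx x ∧ k - 1 ≤ vidx y)
  iseqv := by
    constructor
    · intro x; exact Or.inl rfl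
    · rintro x y (h | h)
      · exact Or.inl h.symm
      · exact Or.inr ⟨h.2, h.1⟩
    · rintro x y z (h₁ | h₁) (h₂ | h₂)
      · exact Or.inl (h₁.trans h₂)
      · exact Or.inr ⟨h₂.1.trans_eq h₁.symm, h₂.2⟩
      · exact Or.inr ⟨h₁.1, h₁.2.trans_eq h₂⟩
      · exact Or.inr ⟨h₁.1, h₂.2⟩

/-- The set `H` of diagrams `ρ` of rank `k` with `τ∘ρ = ρ = ρ∘τ`. -/
def Hset (n k : ℕ) (τ : Setoid (DVert n)) : Set (Setoid (DVert n)) :=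
  {ρ | prank n ρ = k ∧ pcomp n τ ρ = ρ ∧ pcomp n ρ τ = ρ}

section Aux
variable (n k : ℕ)

def labP (hk1 : 1 ≤ k) (π : Equiv.Perm (Fin k)) : DVert n → Fin k :=
  fun x => match x with
  | Sum.inl i => ⟨min i.1 (k-1), by omega⟩
  | Sum.inr j => π⁻¹ ⟨min j.1 (k-1), by omega⟩

def tpermD (hk1 : 1 ≤ k) (π : Equiv.Perm (Fin k)) : Setoid (DVert n) where
  r x y := labP n k hk1 π x = labP n k hk1 π y
  iseqv := ⟨fun _ => rfl, Eq.symm, Eq.trans⟩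

lemma pcomp_tpermD (hk1 : 1 ≤ k) (hkn : k ≤ n) (π σ : Equiv.Perm (Fin k)) :
    pcomp n (tpermD n k hk1 π) (tpermD n k hk1 σ) = tpermD n k hk1 (π * σ) := by
  apply Setoid.ext
  intro x y
  constructor
  · intro h
    have key : ∀ a b : TVert n,
        (glue n (tpermD n k hk1 π) (tpermD n k hk1 σ)).r a b →
        (Sum.elim (fun i : Fin n => (⟨min i.1 (k-1), by omega⟩ : Fin k))
          (Sum.elim (fun i : Fin n => σ⁻¹ ⟨min i.1 (k-1), by omega⟩)
            (fun j : Fin n => σ⁻¹ (π⁻¹ ⟨min j.1 (k-1), by omega⟩)))) a =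
        (Sum.elim (fun i : Fin n => (⟨min i.1 (k-1), by omega⟩ : Fin k))
          (Sum.elim (fun i : Fin n => σ⁻¹ ⟨min i.1 (k-1), by omega⟩)
            (fun j : Fin n => σ⁻¹ (π⁻¹ ⟨min j.1 (k-1), by omega⟩)))) b := by
      intro a b hab
      induction hab with
      | rel u v huv =>
        rcases huv with ⟨a, b, hab, rfl, rfl⟩ | ⟨a, b, hab, rfl, rfl⟩
        · obtain hab : labP n k hk1 σ a = labP n k hk1 σ b := hab
          rcases a with i | i <;> rcases b with j | j <;>
            simpa [labP, embBot] using hab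
        · obtain hab : labP n k hk1 π a = labP n k hk1 π b := hab
          rcases a with i | i <;> rcases b with j | j <;>
            · simp only [labP, embTop, Sum.elim_inl, Sum.elim_inr] at hab ⊢
              rw [hab]
      | refl => rfl
      | symm _ _ _ ih => exact ih.symm
      | trans _ _ _ _ _ ih1 ih2 => exact ih1.trans ih2
    have := key _ _ h
    show labP n k hk1 (π * σ) x = labP n k hk1 (π * σ) y
    rcases x with i | j <;> rcases y with i' | j' <;>
      simpa [labP, embOut, mul_inv_rev, Equiv.Perm.mul_apply] using this
  · intro h
    obtain h : labP n k hk1 (π * σ) x = labP n k hk1 (π * σ) y := h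
    have hcan : ∀ (c : Fin k) (hc : min (c : ℕ) (k-1) < k), (⟨min (c : ℕ) (k-1), hc⟩ : Fin k) = c := by
      intro c hc
      apply Fin.ext
      have := c.2
      simp only []
      omega
    have hrep : ∀ z : DVert n,
        (glue n (tpermD n k hk1 π) (tpermD n k hk1 σ)).r (embOut n z)
          (Sum.inr (Sum.inl ⟨(σ (labP n k hk1 (π * σ) z)).1,
            lt_of_lt_of_le (Fin.is_lt _) hkn⟩)) := by
      rintro (i | j)
      · apply EqvGen.rel
        left
        refine ⟨Sum.inl i, Sum.inr ⟨(σ (labP n k hk1 (π * σ) (Sum.inl i))).1,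
          lt_of_lt_of_le (Fin.is_lt _) hkn⟩, ?_, rfl, rfl⟩
        show labP n k hk1 σ _ = labP n k hk1 σ _
        simp only [labP]
        rw [hcan, Equiv.Perm.coe_inv, Equiv.symm_apply_apply]
      · apply (glue n _ _).iseqv.symm
        apply EqvGen.rel
        right
        refine ⟨Sum.inl ⟨(σ (labP n k hk1 (π * σ) (Sum.inr j))).1,
          lt_of_lt_of_le (Fin.is_lt _) hkn⟩, Sum.inr j, ?_, rfl, rfl⟩
        show labP n k hk1 π _ = labP n k hk1 π _
        simp only [labP]
        rw [hcan]
        simp [mul_inv_rev, Equiv.Perm.mul_apply]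
    have h2 := hrep x
    have h3 := hrep y
    rw [h] at h2
    exact (glue n _ _).iseqv.trans h2 ((glue n _ _).iseqv.symm h3)

lemma tauP_eq (hk1 : 1 ≤ k) : tauP n k = tpermD n k hk1 1 := by
  apply Setoid.ext
  intro x y
  show (vidx x = vidx y ∨ (k - 1 ≤ vidx x ∧ k - 1 ≤ vidx y)) ↔
    labP n k hk1 1 x = labP n k hk1 1 y
  rcases x with i | i <;> rcases y with j | j <;>
    · simp only [vidx, labP, Sum.elim_inl, Sum.elim_inr, inv_one, Equiv.Perm.coe_one, id_eq,
        Fin.mk.injEq]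
      constructor
      · rintro (h | ⟨h1, h2⟩) <;> omega
      · intro h
        rcases Nat.lt_or_ge (Fin.val i) (k-1) with h1 | h1 <;> [left; right] <;> omega

lemma tpermD_inj (hk1 : 1 ≤ k) (hkn : k ≤ n) {π π' : Equiv.Perm (Fin k)}
    (h : tpermD n k hk1 π = tpermD n k hk1 π') : π = π' := by
  have hcan : ∀ (c : Fin k) (hc : min (c : ℕ) (k-1) < k),
      (⟨min (c : ℕ) (k-1), hc⟩ : Fin k) = c := by
    intro c hc; apply Fin.ext; have := c.2; simp only []; omega
  ext b
  have hb : (tpermD n k hk1 π).r (Sum.inl ⟨b.1, b.2.trans_le hkn⟩)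
      (Sum.inr ⟨(π b).1, (π b).2.trans_le hkn⟩) := by
    show labP n k hk1 π _ = labP n k hk1 π _
    simp only [labP]
    rw [hcan, hcan, Equiv.Perm.coe_inv, Equiv.symm_apply_apply]
  rw [h] at hb
  obtain hb : labP n k hk1 π' _ = labP n k hk1 π' _ := hb
  simp only [labP] at hb
  rw [hcan, hcan] at hb
  have := congrArg π' hb
  rw [Equiv.Perm.coe_inv, Equiv.apply_symm_apply] at this
  exact congrArg Fin.val this.symm ▸ (by rw [← this])

lemma prank_tpermD (hk1 : 1 ≤ k) (hkn : k ≤ n) (π : Equiv.Perm (Fin k)) :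
    prank n (tpermD n k hk1 π) = k := by
  have hcan : ∀ (c : Fin k) (hc : min (c : ℕ) (k-1) < k),
      (⟨min (c : ℕ) (k-1), hc⟩ : Fin k) = c := by
    intro c hc; apply Fin.ext; have := c.2; simp only []; omega
  have hlabL : ∀ c : Fin k, labP n k hk1 π (Sum.inl ⟨c.1, c.2.trans_le hkn⟩) = c := by
    intro c; simp only [labP]; rw [hcan]
  have hlabR : ∀ c : Fin k, labP n k hk1 π (Sum.inr ⟨(π c).1, (π c).2.trans_le hkn⟩) = c := by
    intro c; simp only [labP]; rw [hcan, Equiv.Perm.coe_inv, Equiv.symm_apply_apply]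
  have hclasses : (tpermD n k hk1 π).classes =
      Set.range (fun c : Fin k => labP n k hk1 π ⁻¹' {c}) := by
    ext C
    constructor
    · rintro ⟨y, rfl⟩
      exact ⟨labP n k hk1 π y, rfl⟩
    · rintro ⟨c, rfl⟩
      refine ⟨Sum.inl ⟨c.1, c.2.trans_le hkn⟩, ?_⟩
      ext x
      simp only [Set.mem_preimage, Set.mem_singleton_iff, Set.mem_setOf_eq]
      show labP n k hk1 π x = c ↔
        labP n k hk1 π x = labP n k hk1 π (Sum.inl ⟨c.1, c.2.trans_le hkn⟩)
      rw [hlabL]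
  have hprop : ∀ C ∈ (tpermD n k hk1 π).classes, IsPropagating C := by
    intro C hC
    rw [hclasses] at hC
    obtain ⟨c, rfl⟩ := hC
    exact ⟨⟨⟨c.1, c.2.trans_le hkn⟩, hlabL c⟩, ⟨⟨(π c).1, (π c).2.trans_le hkn⟩, hlabR c⟩⟩
  have hsep : {C ∈ (tpermD n k hk1 π).classes | IsPropagating C} =
      (tpermD n k hk1 π).classes := by
    ext C; simp only [Set.mem_setOf_eq]
    exact ⟨fun h => h.1, fun h => ⟨h, hprop C h⟩⟩
  show _ = k
  rw [prank, hsep, hclasses, ← Set.image_univ,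
    Set.ncard_image_of_injective _ (fun c c' hcc' => ?_), Set.ncard_univ, Nat.card_eq_fintype_card,
    Fintype.card_fin]
  have : Sum.inl (⟨c.1, c.2.trans_le hkn⟩ : Fin n) ∈ labP n k hk1 π ⁻¹' {c} := by
    simp [hlabL c]
  rw [hcc'] at this
  have h2 : labP n k hk1 π (Sum.inl ⟨c.1, c.2.trans_le hkn⟩) = c' := this
  rw [hlabL c] at h2
  exact h2

lemma pstar_tau : pstar n (tauP n k) = tauP n k := by
  apply Setoid.ext
  intro x y
  have hv : ∀ z : DVert n, vidx (Sum.swap z) = vidx z := by rintro (i | j) <;> rfl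
  show (vidx x.swap = vidx y.swap ∨ (k - 1 ≤ vidx x.swap ∧ k - 1 ≤ vidx y.swap)) ↔ _
  rw [hv, hv]
  rfl

lemma ccount_tau : ccount n (tauP n k) (tauP n k) = 0 := by
  have : {C ∈ (glue n (tauP n k) (tauP n k)).classes | ∀ x ∈ C, isMiddle x} = ∅ := by
    rw [Set.eq_empty_iff_forall_notMem]
    rintro C ⟨⟨y, rfl⟩, hmid⟩
    have hy : y ∈ {x | (glue n (tauP n k) (tauP n k)).r x y} :=
      (glue n (tauP n k) (tauP n k)).iseqv.refl y
    rcases y with i | (i | j)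
    · obtain ⟨i', hi'⟩ := hmid _ hy
      exact absurd hi' (by simp)
    · have hrel : (glue n (tauP n k) (tauP n k)).r (Sum.inl i) (Sum.inr (Sum.inl i)) :=
        EqvGen.rel _ _ (Or.inl ⟨Sum.inl i, Sum.inr i, Or.inl rfl, rfl, rfl⟩)
      obtain ⟨i', hi'⟩ := hmid _ hrel
      exact absurd hi' (by simp)
    · obtain ⟨i', hi'⟩ := hmid _ hy
      exact absurd hi' (by simp)
  rw [ccount, this, Set.ncard_empty]

lemma tpermD_mem_H (hk1 : 1 ≤ k) (hkn : k ≤ n) (π : Equiv.Perm (Fin k)) :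
    tpermD n k hk1 π ∈ Hset n k (tauP n k) := by
  refine ⟨prank_tpermD n k hk1 hkn π, ?_, ?_⟩
  · rw [tauP_eq n k hk1, pcomp_tpermD n k hk1 hkn, one_mul]
  · rw [tauP_eq n k hk1, pcomp_tpermD n k hk1 hkn, mul_one]

lemma mem_Hset_exists (hk1 : 1 ≤ k) (hkn : k ≤ n) (ρ : Setoid (DVert n))
    (hρ : ρ ∈ Hset n k (tauP n k)) : ∃ π, ρ = tpermD n k hk1 π := by
  obtain ⟨h1, h2, h3⟩ := hρ
  set L : Fin k → DVert n := fun b => Sum.inl ⟨b.1, b.2.trans_le hkn⟩ with hLdef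
  set R : Fin k → DVert n := fun b => Sum.inr ⟨b.1, b.2.trans_le hkn⟩ with hRdef
  -- all high unprimed vertices are related, same for primed
  have hLL : ∀ i j : Fin n, k - 1 ≤ i.1 → k - 1 ≤ j.1 → ρ.r (Sum.inl i) (Sum.inl j) := by
    intro i j hi hj
    rw [← h3]
    exact EqvGen.rel _ _ (Or.inl ⟨Sum.inl i, Sum.inl j, Or.inr ⟨hi, hj⟩, rfl, rfl⟩)
  have hRR : ∀ i j : Fin n, k - 1 ≤ i.1 → k - 1 ≤ j.1 → ρ.r (Sum.inr i) (Sum.inr j) := by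
    intro i j hi hj
    rw [← h2]
    exact EqvGen.rel _ _ (Or.inr ⟨Sum.inr i, Sum.inr j, Or.inr ⟨hi, hj⟩, rfl, rfl⟩)
  have hseedL : ∀ i : Fin n, ρ.r (Sum.inl i) (L ⟨min i.1 (k-1), by omega⟩) := by
    intro i
    rcases Nat.lt_or_ge i.1 (k-1) with h | h
    · have : L ⟨min i.1 (k-1), by omega⟩ = Sum.inl i := by
        simp only [hLdef]
        exact congrArg Sum.inl (Fin.ext (by simp only []; omega))
      rw [this]
    · exact hLL i _ h (by simp only []; omega)
  have hseedR : ∀ i : Fin n, ρ.r (Sum.inr i) (R ⟨min i.1 (k-1), by omega⟩) := by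
    intro i
    rcases Nat.lt_or_ge i.1 (k-1) with h | h
    · have : R ⟨min i.1 (k-1), by omega⟩ = Sum.inr i := by
        simp only [hRdef]
        exact congrArg Sum.inr (Fin.ext (by simp only []; omega))
      rw [this]
    · exact hRR i _ h (by simp only []; omega)
  -- class infrastructure
  have clseq : ∀ a b : DVert n, ρ.r a b → {x | ρ.r x a} = {x | ρ.r x b} := by
    intro a b hab
    ext x
    exact ⟨fun h => ρ.iseqv.trans h hab, fun h => ρ.iseqv.trans h (ρ.iseqv.symm hab)⟩
  have cls_unique : ∀ C ∈ ρ.classes, ∀ y ∈ C, C = {x | ρ.r x y} := by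
    rintro C ⟨z, rfl⟩ y hy
    exact (clseq y z hy).symm
  have hSp : {C ∈ ρ.classes | IsPropagating C}.ncard = k := h1
  have hsubL : {C ∈ ρ.classes | IsPropagating C} ⊆
      Set.range (fun b : Fin k => {x | ρ.r x (L b)}) := by
    rintro C ⟨hC, ⟨i, hiC⟩, -⟩
    refine ⟨⟨min i.1 (k-1), by omega⟩, ?_⟩
    rw [cls_unique C hC _ hiC]
    exact (clseq _ _ (hseedL i)).symm
  have hsubR : {C ∈ ρ.classes | IsPropagating C} ⊆
      Set.range (fun b : Fin k => {x | ρ.r x (R b)}) := by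
    rintro C ⟨hC, -, ⟨i, hiC⟩⟩
    refine ⟨⟨min i.1 (k-1), by omega⟩, ?_⟩
    rw [cls_unique C hC _ hiC]
    exact (clseq _ _ (hseedR i)).symm
  have hcardrange : ∀ g : Fin k → Set (DVert n), (Set.range g).ncard ≤ k := by
    intro g
    rw [← Set.image_univ]
    refine le_trans (Set.ncard_image_le Set.finite_univ) ?_
    rw [Set.ncard_univ, Nat.card_eq_fintype_card, Fintype.card_fin]
  have heqL : {C ∈ ρ.classes | IsPropagating C} =
      Set.range (fun b : Fin k => {x | ρ.r x (L b)}) :=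
    Set.eq_of_subset_of_ncard_le hsubL (by rw [hSp]; exact hcardrange _) (Set.finite_range _)
  have heqR : {C ∈ ρ.classes | IsPropagating C} =
      Set.range (fun b : Fin k => {x | ρ.r x (R b)}) :=
    Set.eq_of_subset_of_ncard_le hsubR (by rw [hSp]; exact hcardrange _) (Set.finite_range _)
  -- distinctness of seed classes
  have hdistinct : ∀ (S : Fin k → DVert n), (∀ b, (fun b => {x | ρ.r x (S b)}) b ∈
        {C ∈ ρ.classes | IsPropagating C} → True) →
      {C ∈ ρ.classes | IsPropagating C} = Set.range (fun b : Fin k => {x | ρ.r x (S b)}) →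
      ∀ b b', ρ.r (S b) (S b') → b = b' := by
    intro S _ heq b b' hbb'
    by_contra hne
    have himg : Set.range (fun b : Fin k => {x | ρ.r x (S b)}) ⊆
        (fun b : Fin k => {x | ρ.r x (S b)}) '' (Set.univ \ {b'}) := by
      rintro _ ⟨c, rfl⟩
      by_cases hc : c = b'
      · subst hc
        exact ⟨b, ⟨trivial, hne⟩, (clseq _ _ hbb')⟩
      · exact ⟨c, ⟨trivial, hc⟩, rfl⟩
    have h5 : k ≤ (Set.univ \ ({b'} : Set (Fin k))).ncard := by
      calc k = {C ∈ ρ.classes | IsPropagating C}.ncard := hSp.symm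
        _ ≤ ((fun b : Fin k => {x | ρ.r x (S b)}) '' (Set.univ \ {b'})).ncard := by
            refine Set.ncard_le_ncard (heq.trans_subset himg) ?_
            exact (Set.finite_univ.diff).image _
        _ ≤ (Set.univ \ ({b'} : Set (Fin k))).ncard :=
            Set.ncard_image_le (Set.finite_univ.diff)
    have h6 : (Set.univ \ ({b'} : Set (Fin k))).ncard = k - 1 := by
      rw [Set.ncard_diff_singleton_of_mem (Set.mem_univ b'), Set.ncard_univ,
        Nat.card_eq_fintype_card, Fintype.card_fin]
    omega
  have hLinj : ∀ b b', ρ.r (L b) (L b') → b = b' :=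
    hdistinct L (fun _ _ => trivial) heqL
  have hRinj : ∀ b b', ρ.r (R b) (R b') → b = b' :=
    hdistinct R (fun _ _ => trivial) heqR
  -- the permutation
  have hex : ∀ b : Fin k, ∃ c : Fin k, {x | ρ.r x (L b)} = {x | ρ.r x (R c)} := by
    intro b
    have hm : {x | ρ.r x (L b)} ∈ Set.range (fun b : Fin k => {x | ρ.r x (L b)}) := ⟨b, rfl⟩
    rw [← heqL, heqR] at hm
    obtain ⟨c, hc⟩ := hm
    exact ⟨c, hc.symm⟩
  set π0 : Fin k → Fin k := fun b => (hex b).choose with hπ0def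
  have hπ0 : ∀ b, ρ.r (L b) (R (π0 b)) := by
    intro b
    have h := (hex b).choose_spec
    have hm : L b ∈ {x | ρ.r x (L b)} := ρ.iseqv.refl _
    rw [h] at hm
    exact hm
  have hπ0inj : Function.Injective π0 := by
    intro b b' hbb'
    exact hLinj b b' (ρ.iseqv.trans (hπ0 b) (ρ.iseqv.symm (hbb' ▸ hπ0 b')))
  set πb : Equiv.Perm (Fin k) := Equiv.ofBijective π0 (Finite.injective_iff_bijective.mp hπ0inj)
    with hπbdef
  have hπbapp : ∀ b, πb b = π0 b := fun b => rfl
  refine ⟨πb, ?_⟩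
  have hlab : ∀ x : DVert n, ρ.r x (L (labP n k hk1 πb x)) := by
    rintro (i | j)
    · exact hseedL i
    · have hs := hseedR j
      have h2 := hπ0 (πb⁻¹ ⟨min j.1 (k-1), by omega⟩)
      have h3 : π0 (πb⁻¹ ⟨min j.1 (k-1), by omega⟩) = ⟨min j.1 (k-1), by omega⟩ := by
        rw [← hπbapp]
        exact Equiv.apply_symm_apply πb _
      rw [h3] at h2
      exact ρ.iseqv.trans hs (ρ.iseqv.symm h2)
  apply Setoid.ext
  intro x y
  constructor
  · intro h
    exact hLinj _ _ (ρ.iseqv.trans (ρ.iseqv.symm (hlab x)) (ρ.iseqv.trans h (hlab y)))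
  · intro h
    obtain h : labP n k hk1 πb x = labP n k hk1 πb y := h
    exact ρ.iseqv.trans (hlab x) (h ▸ ρ.iseqv.symm (hlab y))

end Aux

/-- the diagram `τ = {1,1'} ∪ ⋯ ∪ {k-1,(k-1)'} ∪ {k,…,n,k',…,n'}` satisfies
`τ = τ⋆`, `τ∘τ = τ`, `c(τ,τ) = 0`, and the set `H` of rank-`k` diagrams `ρ` with
`τ∘ρ = ρ = ρ∘τ` is a group under `∘` isomorphic to `S_k`, with identity element `τ`. -/
theorem tauP_group (n k : ℕ) (hk1 : 1 ≤ k) (hkn : k ≤ n) :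
    pstar n (tauP n k) = tauP n k ∧
    pcomp n (tauP n k) (tauP n k) = tauP n k ∧
    ccount n (tauP n k) (tauP n k) = 0 ∧
    tauP n k ∈ Hset n k (tauP n k) ∧
    ∃ f : Setoid (DVert n) → Equiv.Perm (Fin k),
      Set.BijOn f (Hset n k (tauP n k)) Set.univ ∧
      f (tauP n k) = 1 ∧
      ∀ ρ₁ ∈ Hset n k (tauP n k), ∀ ρ₂ ∈ Hset n k (tauP n k),
        pcomp n ρ₁ ρ₂ ∈ Hset n k (tauP n k) ∧
        f (pcomp n ρ₁ ρ₂) = f ρ₁ * f ρ₂ := by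
  have hte : tauP n k = tpermD n k hk1 1 := tauP_eq n k hk1
  refine ⟨pstar_tau n k, ?_, ccount_tau n k, ?_, ?_⟩
  · rw [hte, pcomp_tpermD n k hk1 hkn, mul_one]
  · have hm := tpermD_mem_H n k hk1 hkn 1
    rwa [← hte] at hm
  · set f : Setoid (DVert n) → Equiv.Perm (Fin k) :=
      fun ρ => if h : ∃ π, ρ = tpermD n k hk1 π then h.choose else 1 with hfdef
    have hfval : ∀ π, f (tpermD n k hk1 π) = π := by
      intro π
      have hex : ∃ π', tpermD n k hk1 π = tpermD n k hk1 π' := ⟨π, rfl⟩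
      have h : f (tpermD n k hk1 π) = hex.choose := dif_pos hex
      rw [h]
      exact (tpermD_inj n k hk1 hkn hex.choose_spec).symm
    refine ⟨f, ⟨fun ρ _ => trivial, ?_, ?_⟩, ?_, ?_⟩
    · intro ρ₁ h₁ ρ₂ h₂ hE
      obtain ⟨π₁, rfl⟩ := mem_Hset_exists n k hk1 hkn ρ₁ h₁
      obtain ⟨π₂, rfl⟩ := mem_Hset_exists n k hk1 hkn ρ₂ h₂
      rw [hfval, hfval] at hE
      rw [hE]
    · intro π _
      exact ⟨tpermD n k hk1 π, tpermD_mem_H n k hk1 hkn π, hfval π⟩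
    · rw [hte]
      exact hfval 1
    · intro ρ₁ h₁ ρ₂ h₂
      obtain ⟨π₁, rfl⟩ := mem_Hset_exists n k hk1 hkn ρ₁ h₁
      obtain ⟨π₂, rfl⟩ := mem_Hset_exists n k hk1 hkn ρ₂ h₂
      rw [pcomp_tpermD n k hk1 hkn]
      exact ⟨tpermD_mem_H n k hk1 hkn _, by rw [hfval, hfval, hfval]⟩


end
end
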